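/- arXiv:1607.00257 — 2 statements merged into one kernel-verified Lean document; each statement's English description precedes it below -/
import Mathlib

section
/- Let G be a finite group, p a prime, and M_i a maximal cyclic subgroup of G that is a p-group, with chain C_{i1} ⊊ ··· ⊊ C_{is_i} = M_i of intersections of M_i with the maximal cyclic p-subgroups of G. Let c ∈ G be such that every maximal cyclic subgroup of G containing ⟨c⟩ is a p-group. If C_{i(u−1)} ⊊ ⟨c⟩ ⊆ C_{iu} (with C_{i0} = ∅), then the closed neighborhood of c in the power graph of G equals the closed neighborhood of any generator c_{iu} of C_{iu}. -/
/-- Closed neighborhood of a vertex. -/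
def SimpleGraph.closedNbhd {V : Type*} (Γ : SimpleGraph V) (x : V) : Set V :=
  insert x (Γ.neighborSet x)

/-- `z` strongly resolves `x` and `y`: some shortest path from `z` to `x` contains `y`,
or some shortest path from `z` to `y` contains `x`. -/
def SimpleGraph.StronglyResolves {V : Type*} (Γ : SimpleGraph V) (z x y : V) : Prop :=
  Γ.dist z y + Γ.dist y x = Γ.dist z x ∨ Γ.dist z x + Γ.dist x y = Γ.dist z y

def SimpleGraph.IsStrongResolvingSet {V : Type*} (Γ : SimpleGraph V) (S : Set V) : Prop :=
  ∀ x y : V, x ≠ y → ∃ z ∈ S, Γ.StronglyResolves z x y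

/-- Strong metric dimension. -/
noncomputable def SimpleGraph.sdim {V : Type*} (Γ : SimpleGraph V) : ℕ :=
  sInf {k | ∃ S : Set V, Γ.IsStrongResolvingSet S ∧ S.ncard = k}

/-- Equivalence: equal closed neighborhoods. -/
def SimpleGraph.nbhdSetoid {V : Type*} (Γ : SimpleGraph V) : Setoid V :=
  ⟨fun x y => Γ.closedNbhd x = Γ.closedNbhd y,
   ⟨fun _ => rfl, Eq.symm, Eq.trans⟩⟩

/-- The reduced graph of `Γ`. -/
def SimpleGraph.reduced {V : Type*} (Γ : SimpleGraph V) :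
    SimpleGraph (Quotient Γ.nbhdSetoid) where
  Adj a b := a ≠ b ∧ ∃ x y : V,
    Quotient.mk Γ.nbhdSetoid x = a ∧ Quotient.mk Γ.nbhdSetoid y = b ∧ Γ.Adj x y
  symm := ⟨by
    rintro a b ⟨h, x, y, hx, hy, hxy⟩
    exact ⟨h.symm, y, x, hy, hx, hxy.symm⟩⟩
  loopless := ⟨by rintro a ⟨h, -⟩; exact h rfl⟩

/-- The power graph of a group. -/
def powerGraph (G : Type*) [Group G] : SimpleGraph G where
  Adj x y := x ≠ y ∧ (x ∈ Subgroup.zpowers y ∨ y ∈ Subgroup.zpowers x)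
  symm := ⟨by rintro x y ⟨h, h2⟩; exact ⟨h.symm, h2.symm⟩⟩
  loopless := ⟨by rintro x ⟨h, -⟩; exact h rfl⟩

/-- `σ n`: 1 if `n` is a prime power, otherwise the sum of the exponents in the
prime factorization of `n`. -/
noncomputable def sigmaExp (n : ℕ) : ℕ :=
  if IsPrimePow n then 1 else n.factorization.sum fun _ k => k

/-- A maximal cyclic subgroup. -/
def IsMaxCyclic {G : Type*} [Group G] (M : Subgroup G) : Prop :=
  IsCyclic M ∧ ∀ N : Subgroup G, IsCyclic N → M ≤ N → M = N

/-- The set `𝓜_p` of maximal cyclic subgroups that are `p`-groups. -/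
def maxCycP (p : ℕ) (G : Type*) [Group G] : Set (Subgroup G) :=
  {M | IsMaxCyclic M ∧ IsPGroup p M}

/-- The set of intersections of `M` with members of `𝓜_p`. -/
def inters (p : ℕ) {G : Type*} [Group G] (M : Subgroup G) : Set (Subgroup G) :=
  {C | ∃ N ∈ maxCycP p G, C = M ⊓ N}

/-- `s_i`: the number of distinct intersections. -/
noncomputable def sNum (p : ℕ) {G : Type*} [Group G] (M : Subgroup G) : ℕ :=
  Nat.card (inters p M)

open Classical in
/-- `λ_i`, defined by `p ^ λ_i = max {|M ⊓ N| : N maximal cyclic, not a p-group}`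
if maximal cyclic non-`p`-subgroups exist, and `λ_i = -1` otherwise. -/
noncomputable def lamInt (p : ℕ) {G : Type*} [Group G] (M : Subgroup G) : ℤ :=
  if {N : Subgroup G | IsMaxCyclic N ∧ ¬ IsPGroup p N}.Nonempty then
    (padicValNat p (sSup {k | ∃ N : Subgroup G, IsMaxCyclic N ∧ ¬ IsPGroup p N ∧
        k = Nat.card ↥(M ⊓ N)}) : ℤ)
  else -1

/-- `s_i'`: the least index `u` with `p ^ λ_i < |C_{iu}|` in the chain of intersections;
equivalently one more than the number of intersections of cardinality at most `p ^ λ_i`. -/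
noncomputable def sPrimeNum (p : ℕ) {G : Type*} [Group G] (M : Subgroup G) : ℕ :=
  Nat.card {C | C ∈ inters p M ∧ (Nat.card ↥C : ℚ) ≤ (p : ℚ) ^ (lamInt p M)} + 1

noncomputable def alphaTerm (p : ℕ) {G : Type*} [Group G] (M : Subgroup G) : ℤ :=
  (sNum p M : ℤ) - (sPrimeNum p M : ℤ) + lamInt p M + 2

/-- `α_p = max_i (s_i - s_i' + λ_i + 2)`, with `α_p = 0` when `𝓜_p = ∅`. -/
noncomputable def alphaP (p : ℕ) (G : Type*) [Group G] : ℤ :=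
  sSup (alphaTerm p '' maxCycP p G)

/-- A CP-group: every nonidentity element has prime power order. -/
def IsCPGroup (G : Type*) [Group G] : Prop :=
  ∀ g : G, g ≠ 1 → IsPrimePow (orderOf g)



lemma aux_isCyclic_zpowers {G : Type*} [Group G] (g : G) :
    IsCyclic (Subgroup.zpowers g) :=
  ⟨⟨⟨g, Subgroup.mem_zpowers g⟩, fun x => by
    obtain ⟨x, k, hk⟩ := x
    exact ⟨k, by ext; simp [← hk]⟩⟩⟩

lemma aux_mem_zpowers_of_orderOf_dvd {α : Type*} [Group α] [Fintype α] [IsCyclic α]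
    [DecidableEq α] {x y : α} (h : orderOf x ∣ orderOf y) : x ∈ Subgroup.zpowers y := by
  classical
  have hy : 0 < orderOf y := orderOf_pos y
  have hS := IsCyclic.card_pow_eq_one_le (α := α) hy
  set T : Finset α := Finset.univ.filter (fun a => a ∈ Subgroup.zpowers y) with hTdef
  have hT : T.card = orderOf y := by
    rw [hTdef, ← Fintype.card_subtype, Fintype.card_zpowers]
  have hsub : T ⊆ Finset.univ.filter (fun a => a ^ orderOf y = 1) := by
    intro z hz
    rw [hTdef, Finset.mem_filter] at hz
    obtain ⟨-, k, hk⟩ := hz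
    simp only [Finset.mem_filter, Finset.mem_univ, true_and]
    rw [← hk, ← zpow_natCast, ← zpow_mul, mul_comm, zpow_mul, zpow_natCast,
      pow_orderOf_eq_one, one_zpow]
  have heq : T = Finset.univ.filter (fun a => a ^ orderOf y = 1) :=
    Finset.eq_of_subset_of_card_le hsub (by rw [hT]; exact hS)
  have hxF : x ∈ Finset.univ.filter (fun a => a ^ orderOf y = 1) := by
    simp only [Finset.mem_filter, Finset.mem_univ, true_and]
    exact orderOf_dvd_iff_pow_eq_one.mp h
  rw [← heq, hTdef, Finset.mem_filter] at hxF
  exact hxF.2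

lemma aux_chain_elems {G : Type*} [Group G] [Finite G] {p : ℕ} (hp : p.Prime)
    (K : Subgroup G) (hcyc : IsCyclic K) (hpg : IsPGroup p K)
    {x y : G} (hx : x ∈ K) (hy : y ∈ K) :
    x ∈ Subgroup.zpowers y ∨ y ∈ Subgroup.zpowers x := by
  classical
  haveI : Fact p.Prime := ⟨hp⟩
  haveI : Fintype K := Fintype.ofFinite K
  set x' : K := ⟨x, hx⟩
  set y' : K := ⟨y, hy⟩
  obtain ⟨a, ha⟩ := IsPGroup.iff_orderOf.mp hpg x'
  obtain ⟨b, hb⟩ := IsPGroup.iff_orderOf.mp hpg y'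
  have lift : ∀ (u v : K), u ∈ Subgroup.zpowers v →
      (u : G) ∈ Subgroup.zpowers (v : G) := by
    rintro u v ⟨k, hk⟩
    exact ⟨k, by simpa using congrArg Subtype.val hk⟩
  rcases le_total a b with hab | hba
  · left
    refine lift x' y' (aux_mem_zpowers_of_orderOf_dvd ?_)
    rw [ha, hb]; exact pow_dvd_pow p hab
  · right
    refine lift y' x' (aux_mem_zpowers_of_orderOf_dvd ?_)
    rw [ha, hb]; exact pow_dvd_pow p hba

lemma aux_chain_subs {G : Type*} [Group G] [Finite G] {p : ℕ} (hp : p.Prime)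
    (K : Subgroup G) (hcyc : IsCyclic K) (hpg : IsPGroup p K)
    {H1 H2 : Subgroup G} (h1 : H1 ≤ K) (h2 : H2 ≤ K) : H1 ≤ H2 ∨ H2 ≤ H1 := by
  by_cases h : H1 ≤ H2
  · exact Or.inl h
  · right
    obtain ⟨a, ha1, ha2⟩ := SetLike.not_le_iff_exists.mp h
    intro b hb
    rcases aux_chain_elems hp K hcyc hpg (h1 ha1) (h2 hb) with hab | hba
    · exact absurd ((Subgroup.zpowers_le.mpr hb) hab) ha2
    · exact (Subgroup.zpowers_le.mpr ha1) hba

lemma aux_exists_maxCyclic {G : Type*} [Group G] [Finite G] (g : G) :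
    ∃ K : Subgroup G, IsMaxCyclic K ∧ Subgroup.zpowers g ≤ K := by
  classical
  obtain ⟨K, ⟨hKc, hKg⟩, hmax⟩ :=
    Set.Finite.exists_maximalFor id
      {N : Subgroup G | IsCyclic N ∧ Subgroup.zpowers g ≤ N} (Set.toFinite _)
      ⟨Subgroup.zpowers g, aux_isCyclic_zpowers g, le_refl _⟩
  exact ⟨K, ⟨hKc, fun N hN hle => le_antisymm hle (hmax ⟨hN, hKg.trans hle⟩ hle)⟩, hKg⟩

lemma aux_mem_closedNbhd {G : Type*} [Group G] (x z : G) :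
    z ∈ (powerGraph G).closedNbhd x ↔
      (x ∈ Subgroup.zpowers z ∨ z ∈ Subgroup.zpowers x) := by
  constructor
  · rintro (rfl | ⟨-, h⟩)
    · exact Or.inl (Subgroup.mem_zpowers _)
    · exact h
  · intro h
    by_cases hz : z = x
    · exact Or.inl hz
    · exact Or.inr ⟨Ne.symm hz, h⟩

theorem stmt_6 {G : Type*} [Group G] [Finite G] (p : ℕ) (hp : p.Prime)
    (M : Subgroup G) (hM : M ∈ maxCycP p G)
    (c : G) (hc : ∀ N : Subgroup G, IsMaxCyclic N → Subgroup.zpowers c ≤ N → IsPGroup p N)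
    (C : Subgroup G) (hCmem : C ∈ inters p M)
    (hle : Subgroup.zpowers c ≤ C)
    (hprev : ∀ C' ∈ inters p M, C' < C → C' < Subgroup.zpowers c)
    (d : G) (hd : Subgroup.zpowers d = C) :
    (powerGraph G).closedNbhd c = (powerGraph G).closedNbhd d := by
  classical
  obtain ⟨N, hN, hCN⟩ := hCmem
  obtain ⟨⟨hMcyc, hMmax⟩, hMp⟩ := hM
  have hCM : C ≤ M := by rw [hCN]; exact inf_le_left
  have hcC : c ∈ C := hle (Subgroup.mem_zpowers c)
  have hcM : c ∈ M := hCM hcC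
  have hdC : d ∈ C := by rw [← hd]; exact Subgroup.mem_zpowers d
  have hdM : d ∈ M := hCM hdC
  have key : ∀ y : G, (c ∈ Subgroup.zpowers y ∨ y ∈ Subgroup.zpowers c) ↔
      (d ∈ Subgroup.zpowers y ∨ y ∈ Subgroup.zpowers d) := by
    intro y
    constructor
    · rintro (hcy | hyc)
      · obtain ⟨K, hKmax, hyK⟩ := aux_exists_maxCyclic y
        have hcK : c ∈ K := hyK hcy
        have hKp : IsPGroup p K := hc K hKmax (Subgroup.zpowers_le.mpr hcK)
        have hMK : M ⊓ K ∈ inters p M := ⟨K, ⟨hKmax, hKp⟩, rfl⟩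
        have hcomp := aux_chain_subs hp M hMcyc hMp
          (inf_le_left : M ⊓ K ≤ M) hCM
        have hCK : C ≤ K := by
          rcases hcomp with hlt | hge
          · rcases eq_or_lt_of_le hlt with heq | hlt'
            · rw [← heq]; exact inf_le_right
            · exfalso
              have h1 := hprev _ hMK hlt'
              have h2 : Subgroup.zpowers c ≤ M ⊓ K :=
                le_inf (Subgroup.zpowers_le.mpr hcM) (Subgroup.zpowers_le.mpr hcK)
              exact absurd (lt_of_lt_of_le h1 h2) (lt_irrefl _)
          · exact hge.trans inf_le_right
        exact aux_chain_elems hp K hKmax.1 hKp (hCK hdC) (hyK (Subgroup.mem_zpowers y))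
      · right
        rw [← hd] at hle
        exact hle hyc
    · rintro (hdy | hyd)
      · left
        have : c ∈ Subgroup.zpowers d := by rw [hd]; exact hcC
        exact (Subgroup.zpowers_le.mpr hdy) this
      · have hyM : y ∈ M := hCM (by rw [← hd]; exact hyd)
        exact aux_chain_elems hp M hMcyc hMp hcM hyM
  ext z
  rw [aux_mem_closedNbhd, aux_mem_closedNbhd]
  exact key z
end

section
/- For any prime p and n ≥ 1 with p^n > p (i.e., the group is noncyclic, so n ≥ 2), the strong metric dimension of the power graph of the elementary abelian group (Z_p)^n equals p^n − 2. -/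
theorem stmt_12 (p : ℕ) (hp : p.Prime) (n : ℕ) (hn : 2 ≤ n) :
    ((powerGraph (Multiplicative (Fin n → ZMod p))).sdim : ℤ) =
      (p : ℤ) ^ n - 2 := by
  haveI : Fact p.Prime := ⟨hp⟩
  haveI : NeZero p := ⟨hp.ne_zero⟩
  set G := Multiplicative (Fin n → ZMod p) with hG
  set Γ := powerGraph G with hΓ
  have hcardG : Nat.card G = p ^ n := by
    simp [hG, Nat.card_eq_fintype_card, ZMod.card]
  -- every element satisfies x ^ p = 1
  have hpow : ∀ x : G, x ^ p = 1 := by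
    intro x
    have h0 : p • (Multiplicative.toAdd x) = 0 := by
      funext i
      simp [Pi.smul_apply, nsmul_eq_mul, ZMod.natCast_self]
    rw [← ofAdd_toAdd (x ^ p), toAdd_pow, h0, ofAdd_zero]
  have horder : ∀ x : G, x ≠ 1 → orderOf x = p := by
    intro x hx
    refine (hp.eq_one_or_self_of_dvd _ (orderOf_dvd_of_pow_eq_one (hpow x))).resolve_left ?_
    simpa [orderOf_eq_one_iff] using hx
  have hzp : ∀ x y : G, x ≠ 1 → y ≠ 1 → x ∈ Subgroup.zpowers y →
      Subgroup.zpowers x = Subgroup.zpowers y := by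
    intro x y hx hy hmem
    refine Subgroup.eq_of_le_of_card_ge (Subgroup.zpowers_le.2 hmem) ?_
    rw [Nat.card_zpowers, Nat.card_zpowers, horder x hx, horder y hy]
  have hadj1 : ∀ x : G, x ≠ 1 → Γ.Adj x 1 := fun x hx => ⟨hx, Or.inr (one_mem _)⟩
  have hadjEq : ∀ x y : G, x ≠ y →
      Subgroup.zpowers x = Subgroup.zpowers y → Γ.Adj x y := by
    intro x y hxy h
    exact ⟨hxy, Or.inl (h ▸ Subgroup.mem_zpowers x)⟩
  have hadjZp : ∀ x y : G, x ≠ 1 → y ≠ 1 → Γ.Adj x y →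
      Subgroup.zpowers x = Subgroup.zpowers y := by
    intro x y hx hy hA
    obtain ⟨hne, h | h⟩ := hA
    · exact hzp x y hx hy h
    · exact (hzp y x hy hx h).symm
  have hreach : ∀ x : G, Γ.Reachable x 1 := by
    intro x
    by_cases hx : x = 1
    · rw [hx]
    · exact (hadj1 x hx).reachable
  have hconn : Γ.Connected := by
    rw [SimpleGraph.connected_iff]
    exact ⟨fun x y => (hreach x).trans (hreach y).symm, ⟨1⟩⟩
  have hdist_le : ∀ x y : G, Γ.dist x y ≤ 2 := by
    intro x y
    by_cases hxy : x = y
    · simp [hxy, SimpleGraph.dist_self]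
    by_cases hAdj : Γ.Adj x y
    · rw [SimpleGraph.dist_eq_one_iff_adj.2 hAdj]; omega
    · have hx : x ≠ 1 := by
        rintro rfl; exact hAdj ((hadj1 y (Ne.symm hxy)).symm)
      have hy : y ≠ 1 := by
        rintro rfl; exact hAdj (hadj1 x hxy)
      calc Γ.dist x y ≤ (SimpleGraph.Walk.cons (hadj1 x hx)
            (SimpleGraph.Walk.cons ((hadj1 y hy).symm) SimpleGraph.Walk.nil)).length :=
            Γ.dist_le _
        _ = 2 := by simp
  have hdist_pos : ∀ x y : G, x ≠ y → 1 ≤ Γ.dist x y := fun x y h =>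
    hconn.pos_dist_of_ne h
  have hdist_adj : ∀ x y : G, Γ.Adj x y → Γ.dist x y = 1 := fun _ _ h =>
    SimpleGraph.dist_eq_one_iff_adj.2 h
  have hdist_two : ∀ x y : G, x ≠ y → ¬ Γ.Adj x y → Γ.dist x y = 2 := by
    intro x y h hA
    have h1 := hdist_pos x y h
    have h2 := hdist_le x y
    have h3 : Γ.dist x y ≠ 1 := fun e => hA (SimpleGraph.dist_eq_one_iff_adj.1 e)
    omega
  have htri : ∀ z x y : G, z ≠ x → z ≠ y → x ≠ y →
      Γ.dist z y + Γ.dist y x = Γ.dist z x →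
      Γ.Adj z y ∧ Γ.Adj y x ∧ ¬ Γ.Adj z x := by
    intro z x y hzx hzy hxy heq
    have b1 := hdist_pos z y hzy
    have b2 := hdist_pos y x (Ne.symm hxy)
    have b3 := hdist_le z x
    have e1 : Γ.dist z y = 1 := by omega
    have e2 : Γ.dist y x = 1 := by omega
    have e3 : Γ.dist z x = 2 := by omega
    refine ⟨SimpleGraph.dist_eq_one_iff_adj.1 e1, SimpleGraph.dist_eq_one_iff_adj.1 e2, ?_⟩
    intro hA
    rw [hdist_adj _ _ hA] at e3
    omega
  have hkey : ∀ z x y : G, x ≠ 1 → y ≠ 1 → x ≠ y → Γ.StronglyResolves z x y →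
      z = x ∨ z = y := by
    intro z x y hx hy hxy hres
    by_contra hc
    push_neg at hc
    obtain ⟨hzx, hzy⟩ := hc
    have hzadj : ∀ a b : G, a ≠ 1 → b ≠ 1 → Γ.Adj z b → Γ.Adj b a → z ≠ a → Γ.Adj z a := by
      intro a b ha hb h1 h2 hza
      by_cases hz : z = 1
      · subst hz; exact (hadj1 a ha).symm
      · exact hadjEq z a hza ((hadjZp z b hz hb h1).trans (hadjZp b a hb ha h2))
    rcases hres with h | h
    · obtain ⟨a1, a2, a3⟩ := htri z x y hzx hzy hxy h
      exact a3 (hzadj x y hx hy a1 a2 hzx)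
    · obtain ⟨a1, a2, a3⟩ := htri z y x hzy hzx (Ne.symm hxy) h
      exact a3 (hzadj y x hy hx a1 a2 hzy)
  haveI : Nonempty (Fin n) := ⟨⟨0, by omega⟩⟩
  haveI : Nontrivial G := by
    have : Nontrivial (Fin n → ZMod p) := inferInstance
    exact this
  obtain ⟨g, hg⟩ := exists_ne (1 : G)
  have hout : ∀ y : G, y ≠ 1 → ∃ z : G, z ∉ Subgroup.zpowers y := by
    intro y hy
    by_contra hcon
    push_neg at hcon
    have htop : Subgroup.zpowers y = ⊤ := (Subgroup.eq_top_iff' _).2 hcon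
    have h1 : Nat.card (Subgroup.zpowers y) = p := by
      rw [Nat.card_zpowers, horder y hy]
    rw [htop, Subgroup.card_top, hcardG] at h1
    have hlt : p < p ^ n := by
      calc p = p ^ 1 := (pow_one p).symm
        _ < p ^ n := Nat.pow_lt_pow_right hp.one_lt (by omega)
    omega
  have hself : ∀ x y : G, Γ.StronglyResolves x x y := by
    intro x y
    right
    simp [SimpleGraph.dist_self]
  have hself2 : ∀ x y : G, Γ.StronglyResolves y x y := by
    intro x y
    left
    simp [SimpleGraph.dist_self]
  have hres1 : ∀ w z : G, w ≠ 1 → z ∉ Subgroup.zpowers w →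
      Γ.StronglyResolves z 1 w ∧ Γ.StronglyResolves z w 1 := by
    intro w z hw hz
    have hz1 : z ≠ 1 := by
      intro e; apply hz; rw [e]; exact one_mem _
    have hzw : z ≠ w := by
      intro e; apply hz; rw [e]; exact Subgroup.mem_zpowers w
    have hnadj : ¬ Γ.Adj z w := by
      intro hA
      apply hz
      rw [← hadjZp z w hz1 hw hA]
      exact Subgroup.mem_zpowers z
    have d1 : Γ.dist z 1 = 1 := hdist_adj _ _ (hadj1 z hz1)
    have d2 : Γ.dist (1 : G) w = 1 := hdist_adj _ _ ((hadj1 w hw).symm)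
    have d3 : Γ.dist z w = 2 := hdist_two z w hzw hnadj
    constructor
    · right; rw [d1, d2, d3]
    · left; rw [d1, d2, d3]
  have h2pn : 2 ≤ p ^ n := by
    have h4 : 2 ^ 2 ≤ p ^ n :=
      le_trans (Nat.pow_le_pow_left hp.two_le 2) (Nat.pow_le_pow_right hp.pos hn)
    omega
  have hupper : ∃ S : Set G, Γ.IsStrongResolvingSet S ∧ S.ncard = p ^ n - 2 := by
    refine ⟨({1, g} : Set G)ᶜ, ?_, ?_⟩
    · intro x y hxy
      by_cases hxS : x ∈ ({1, g} : Set G)ᶜ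
      · exact ⟨x, hxS, hself x y⟩
      by_cases hyS : y ∈ ({1, g} : Set G)ᶜ
      · exact ⟨y, hyS, hself2 x y⟩
      simp only [Set.mem_compl_iff, not_not, Set.mem_insert_iff, Set.mem_singleton_iff]
        at hxS hyS
      obtain ⟨z, hz⟩ := hout g hg
      have hz1 : z ≠ 1 := by
        intro e; apply hz; rw [e]; exact one_mem _
      have hzg : z ≠ g := by
        intro e; apply hz; rw [e]; exact Subgroup.mem_zpowers g
      have hzS : z ∈ ({1, g} : Set G)ᶜ := by simp [hz1, hzg]
      rcases hxS with h1 | h1 <;> rcases hyS with h2 | h2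
      · exact absurd (h1.trans h2.symm) hxy
      · rw [h1, h2]; exact ⟨z, hzS, (hres1 g z hg hz).1⟩
      · rw [h1, h2]; exact ⟨z, hzS, (hres1 g z hg hz).2⟩
      · exact absurd (h1.trans h2.symm) hxy
    · have h2 : ({1, g} : Set G).ncard = 2 := Set.ncard_pair (Ne.symm hg)
      have hcc := Set.ncard_add_ncard_compl ({1, g} : Set G)
      rw [h2, hcardG] at hcc
      omega
  have hlower : ∀ S : Set G, Γ.IsStrongResolvingSet S → p ^ n - 2 ≤ S.ncard := by
    intro S hS
    have hpair : ∀ x y : G, x ≠ 1 → y ≠ 1 → x ≠ y → x ∈ S ∨ y ∈ S := by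
      intro x y hx hy hxy
      obtain ⟨z, hzS, hres⟩ := hS x y hxy
      rcases hkey z x y hx hy hxy hres with rfl | rfl
      · exact Or.inl hzS
      · exact Or.inr hzS
    have hex : ∃ a : G, Set.univ \ ({1, a} : Set G) ⊆ S := by
      by_cases hc : ∃ a : G, a ≠ 1 ∧ a ∉ S
      · obtain ⟨a, ha1, haS⟩ := hc
        refine ⟨a, fun x hx => ?_⟩
        simp only [Set.mem_diff, Set.mem_univ, Set.mem_insert_iff, Set.mem_singleton_iff,
          true_and, not_or] at hx
        obtain ⟨hx1, hxa⟩ := hx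
        rcases hpair x a hx1 ha1 hxa with h | h
        · exact h
        · exact absurd h haS
      · push_neg at hc
        refine ⟨1, fun x hx => ?_⟩
        simp only [Set.mem_diff, Set.mem_univ, Set.mem_insert_iff, Set.mem_singleton_iff,
          true_and, not_or] at hx
        exact hc x hx.1
    obtain ⟨a, hsub⟩ := hex
    have h1 : (Set.univ \ ({1, a} : Set G)).ncard ≤ S.ncard :=
      Set.ncard_le_ncard hsub (Set.toFinite S)
    have h2 : (Set.univ \ ({1, a} : Set G)).ncard
        = Nat.card G - ({1, a} : Set G).ncard := by
      rw [Set.ncard_diff (Set.subset_univ _), Set.ncard_univ]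
    have h3 : ({1, a} : Set G).ncard ≤ 2 :=
      le_trans (Set.ncard_insert_le _ _) (by simp)
    rw [hcardG] at h2
    omega
  obtain ⟨S0, hS0, hc0⟩ := hupper
  have hfin : Γ.sdim = p ^ n - 2 := by
    unfold SimpleGraph.sdim
    apply le_antisymm
    · exact Nat.sInf_le ⟨S0, hS0, hc0⟩
    · refine le_csInf ⟨p ^ n - 2, S0, hS0, hc0⟩ ?_
      rintro k ⟨S, hS, rfl⟩
      exact hlower S hS
  rw [hfin, Nat.cast_sub h2pn]
  push_cast
  ring
end
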